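/- Let n ≥ 3, let G be the cycle graph on n vertices, and let r be a vertex of G. The number of vertex sets C that are seclusion-maximal with respect to the property "r ∈ C, G[C] is connected, G[C] is acyclic, and |N_G(C)| ≤ 1" is exactly n − 1; these sets are exactly the sets V(G) \ {v} for v ≠ r. -/

import Mathlib

open SimpleGraph

/-- The open neighborhood of a vertex set `C` in a graph `G`. -/
def openNbhd {V : Type} (G : SimpleGraph V) (C : Set V) : Set V :=
  {v | v ∉ C ∧ ∃ u ∈ C, G.Adj u v}

/-- `C` is seclusion-maximal for property `Pr`: it satisfies `Pr` and every strict
superset satisfying `Pr` has a strictly larger open neighborhood. -/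
def SeclusionMaximal {V : Type} (G : SimpleGraph V) (Pr : Set V → Prop) (C : Set V) : Prop :=
  Pr C ∧ ∀ C' : Set V, C ⊂ C' → Pr C' → (openNbhd G C).ncard < (openNbhd G C').ncard

/-- The cycle graph on `ℤ/nℤ`: `i` is adjacent to `i ± 1`. -/
def zmodCycle (n : ℕ) : SimpleGraph (ZMod n) where
  Adj i j := i ≠ j ∧ (i - j = 1 ∨ j - i = 1)
  symm := ⟨fun i j h => ⟨h.1.symm, h.2.symm⟩⟩
  loopless := ⟨fun i h => h.1 rfl⟩


section basic
variable {n : ℕ} (hn : 3 ≤ n)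
include hn

lemma zc_one_ne_zero : (1 : ZMod n) ≠ 0 := by
  haveI : NeZero n := ⟨by omega⟩
  haveI : Fact (1 < n) := ⟨by omega⟩
  intro h
  have := congrArg ZMod.val h
  rw [ZMod.val_one n, ZMod.val_zero] at this
  exact one_ne_zero this

lemma zc_adj_succ (x : ZMod n) : (zmodCycle n).Adj x (x + 1) := by
  refine ⟨fun h => zc_one_ne_zero hn ?_, Or.inr (by ring)⟩
  have : x + 1 - x = x - x := by rw [← h]
  simpa using this

lemma zc_adj_succ' (x : ZMod n) : (zmodCycle n).Adj (x + 1) x := ((zc_adj_succ hn x).symm)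

omit hn in
lemma natCast_inj_of_lt {i j : ℕ} (hi : i < n) (hj : j < n) (h : (i : ZMod n) = j) : i = j := by
  rw [← ZMod.val_cast_of_lt hi, ← ZMod.val_cast_of_lt hj, h]

end basic

section firsthit
variable {n : ℕ} (hn : 3 ≤ n)
include hn

lemma exists_first (C : Set (ZMod n)) (r : ZMod n) (hr : r ∈ C) (u : ZMod n) (hu : u ∉ C)
    (ε : ZMod n) (hε : ε * ε = 1)
    (h1 : u + ε ∉ C) (h2 : u - ε ∉ C) :
    ∃ d : ℕ, 2 ≤ d ∧ d ≤ n - 2 ∧ u + (d : ZMod n) * ε ∈ C ∧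
      ∀ j : ℕ, 1 ≤ j → j < d → u + (j : ZMod n) * ε ∉ C := by
  haveI : NeZero n := ⟨by omega⟩
  classical
  set k := (ε * (r - u)).val with hk
  have hkcast : ((k : ℕ) : ZMod n) = ε * (r - u) := ZMod.natCast_rightInverse _
  have hkne : k ≠ 0 := by
    intro h0
    have h3 : ε * (r - u) = 0 := by rw [← hkcast, h0]; simp
    have : r - u = 0 := by
      have : ε * (ε * (r - u)) = ε * 0 := by rw [h3]
      rwa [← mul_assoc, hε, one_mul, mul_zero] at this
    rw [sub_eq_zero] at this
    exact hu (this ▸ hr)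
  have hklt : k < n := ZMod.val_lt _
  have hkmem : u + (k : ZMod n) * ε ∈ C := by
    rw [hkcast]
    have : u + ε * (r - u) * ε = r := by
      have h4 : ε * (r - u) * ε = (ε * ε) * (r - u) := by ring
      rw [h4, hε]; ring
    rwa [this]
  have hP : ∃ m : ℕ, u + (((m : ℕ)+1 : ℕ) : ZMod n) * ε ∈ C := by
    refine ⟨k - 1, ?_⟩
    have : k - 1 + 1 = k := by omega
    rw [this]; exact hkmem
  set m0 := Nat.find hP with hm0
  have hmem : u + (((m0 : ℕ)+1 : ℕ) : ZMod n) * ε ∈ C := Nat.find_spec hP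
  have hmin : ∀ m < m0, u + (((m : ℕ)+1 : ℕ) : ZMod n) * ε ∉ C := fun m hm => Nat.find_min hP hm
  have hm0le : m0 ≤ k - 1 := Nat.find_le (by
    have : k - 1 + 1 = k := by omega
    rw [this]; exact hkmem)
  have hne1 : m0 + 1 ≠ n - 1 := by
    intro he
    apply h2
    have hcast : (((m0 + 1 : ℕ)) : ZMod n) = -1 := by
      rw [he]
      have h5 : ((n : ℕ) : ZMod n) = 0 := ZMod.natCast_self n
      push_cast [Nat.cast_sub (by omega : 1 ≤ n)]
      rw [h5]; ring
    rw [hcast] at hmem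
    simpa [sub_eq_add_neg, neg_one_mul] using hmem
  refine ⟨m0 + 1, ?_, ?_, ?_, ?_⟩
  · rcases Nat.eq_zero_or_pos m0 with h | h
    · exfalso
      rw [h] at hmem
      exact h1 (by simpa using hmem)
    · omega
  · omega
  · exact_mod_cast hmem
  · intro j hj1 hj2
    have hlt : j - 1 < m0 := by omega
    have := hmin _ hlt
    have hj : (j - 1) + 1 = j := by omega
    rwa [hj] at this

end firsthit

section twob
variable {n : ℕ} (hn : 3 ≤ n)
include hn

lemma two_nbhd (C : Set (ZMod n)) (r : ZMod n) (hr : r ∈ C) (u : ZMod n) (hu : u ∉ C)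
    (h1 : u + 1 ∉ C) (h2 : u - 1 ∉ C) :
    ∃ a b, a ≠ b ∧ a ∈ openNbhd (zmodCycle n) C ∧ b ∈ openNbhd (zmodCycle n) C := by
  haveI : NeZero n := ⟨by omega⟩
  obtain ⟨d₁, hd₁2, hd₁n, hd₁mem, hd₁min⟩ :=
    exists_first hn C r hr u hu 1 (by ring) h1 h2
  obtain ⟨d₂, hd₂2, hd₂n, hd₂mem, hd₂min⟩ :=
    exists_first hn C r hr u hu (-1) (by ring) (by simpa [sub_eq_add_neg] using h2)
      (by simpa [sub_neg_eq_add] using h1)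
  -- boundary points
  refine ⟨u + ((d₁ - 1 : ℕ) : ZMod n), u - ((d₂ - 1 : ℕ) : ZMod n), ?_, ?_, ?_⟩
  · -- distinct
    intro he
    have he' : (((d₁ - 1 : ℕ) + (d₂ - 1 : ℕ) : ℕ) : ZMod n) = 0 := by
      push_cast
      have : ((d₁ - 1 : ℕ) : ZMod n) = -((d₂ - 1 : ℕ) : ZMod n) := by
        have := sub_eq_zero.mpr he
        linear_combination this
      rw [this]; ring
    have hdvd : n ∣ (d₁ - 1) + (d₂ - 1) := (ZMod.natCast_eq_zero_iff _ n).mp he'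
    have hsum : (d₁ - 1) + (d₂ - 1) = n := by
      rcases hdvd with ⟨c, hc⟩
      have hpos : 0 < (d₁ - 1) + (d₂ - 1) := by omega
      have hub : (d₁ - 1) + (d₂ - 1) < 2 * n := by omega
      have hc2 : c = 1 := by
        rcases c with _ | _ | c
        · omega
        · rfl
        · exfalso; nlinarith
      rw [hc2, mul_one] at hc
      omega
    -- then u + d₁ = u - (d₂ - 2)
    have hq : d₂ - 2 = 0 ∨ 1 ≤ d₂ - 2 := by omega
    rcases hq with hq | hq
    · omega
    · have key : ((d₁ : ℕ) : ZMod n) = ((d₂ - 2 : ℕ) : ZMod n) * (-1) := by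
        have : (((d₁ : ℕ) + (d₂ - 2 : ℕ) : ℕ) : ZMod n) = 0 := by
          have : d₁ + (d₂ - 2) = n := by omega
          rw [this]; exact ZMod.natCast_self n
        push_cast at this
        linear_combination this
      have := hd₂min (d₂ - 2) hq (by omega)
      apply this
      rw [← key]
      simpa using hd₁mem
  · refine ⟨?_, ⟨u + (d₁ : ZMod n), by simpa using hd₁mem, ?_⟩⟩
    · have := hd₁min (d₁ - 1) (by omega) (by omega)
      simpa using this
    · have hc : ((d₁ : ℕ) : ZMod n) = ((d₁ - 1 : ℕ) : ZMod n) + 1 := by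
        have : d₁ = (d₁ - 1) + 1 := by omega
        rw [this]; push_cast; ring
      rw [hc, ← add_assoc]
      exact zc_adj_succ' hn _
  · refine ⟨?_, ⟨u - (d₂ : ZMod n), by simpa [sub_eq_add_neg, neg_one_mul] using hd₂mem, ?_⟩⟩
    · have := hd₂min (d₂ - 1) (by omega) (by omega)
      simpa [sub_eq_add_neg, neg_one_mul] using this
    · have hc : u - ((d₂ - 1 : ℕ) : ZMod n) = (u - ((d₂ : ℕ) : ZMod n)) + 1 := by
        have : d₂ = (d₂ - 1) + 1 := by omega
        rw [this]; push_cast; ring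
      rw [hc]
      exact zc_adj_succ hn _

end twob

-- generic chain walk
lemma chain_walk {V : Type} (G : SimpleGraph V) :
    ∀ (k : ℕ) (v : ℕ → V), (∀ i < k, G.Adj (v i) (v (i+1))) →
      ∃ w : G.Walk (v 0) (v k),
        w.support = (List.range (k+1)).map v ∧
        w.edges = (List.range k).map (fun i => s(v i, v (i+1))) := by
  intro k
  induction k with
  | zero => intro v _; exact ⟨Walk.nil, by simp [List.range_succ], by simp⟩
  | succ k ih =>
    intro v hv
    obtain ⟨w, hs, he⟩ := ih (fun i => v (i+1)) (fun i hi => hv (i+1) (by omega))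
    refine ⟨Walk.cons (hv 0 (by omega)) w, ?_, ?_⟩
    · rw [Walk.support_cons, hs, List.range_succ_eq_map (n := k+1)]
      simp [List.map_map, Function.comp]
    · rw [Walk.edges_cons, he, List.range_succ_eq_map (n := k)]
      simp [List.map_map, Function.comp]

section univcyc
variable {n : ℕ} (hn : 3 ≤ n)
include hn

lemma univ_not_acyclic : ¬ ((zmodCycle n).induce (Set.univ : Set (ZMod n))).IsAcyclic := by
  haveI : NeZero n := ⟨by omega⟩
  set H := (zmodCycle n).induce (Set.univ : Set (ZMod n)) with hH
  set vf : ℕ → (Set.univ : Set (ZMod n)) := fun i => ⟨((1 + i : ℕ) : ZMod n), trivial⟩ with hvf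
  have hadj : ∀ i < n - 1, H.Adj (vf i) (vf (i + 1)) := by
    intro i _
    show (zmodCycle n).Adj _ _
    have h6 : ((1 + (i+1) : ℕ) : ZMod n) = ((1 + i : ℕ) : ZMod n) + 1 := by push_cast; ring
    simp only [hvf, h6]
    exact zc_adj_succ hn _
  obtain ⟨w, hws, hwe⟩ := chain_walk H (n - 1) vf hadj
  have hend : vf (n - 1) = ⟨(0 : ZMod n), trivial⟩ := by
    apply Subtype.ext
    show ((1 + (n - 1) : ℕ) : ZMod n) = 0
    have h7 : 1 + (n - 1) = n := by omega
    rw [h7]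
    exact ZMod.natCast_self n
  have hinj : ∀ i < n, ∀ j < n, vf i = vf j → i = j := by
    intro i hi j hj h
    have h8 : ((1 + i : ℕ) : ZMod n) = ((1 + j : ℕ) : ZMod n) := congrArg Subtype.val h
    push_cast at h8
    have h9 : ((i : ℕ) : ZMod n) = ((j : ℕ) : ZMod n) := by linear_combination h8
    exact natCast_inj_of_lt hi hj h9
  have hadj01 : H.Adj ⟨(0 : ZMod n), trivial⟩ ⟨(1 : ZMod n), trivial⟩ := by
    show (zmodCycle n).Adj (0 : ZMod n) 1
    simpa using zc_adj_succ hn 0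
  have hv0 : vf 0 = ⟨(1 : ZMod n), trivial⟩ := by
    apply Subtype.ext; show ((1 + 0 : ℕ) : ZMod n) = 1; norm_num
  set p : H.Walk ⟨(1 : ZMod n), trivial⟩ ⟨(0 : ZMod n), trivial⟩ := w.copy hv0 hend with hp
  intro hac
  refine hac _ ((Walk.cons_isCycle_iff p hadj01).mpr ?_)
  constructor
  · apply Walk.IsPath.mk'
    rw [hp, Walk.support_copy, hws]
    rw [List.nodup_map_iff_inj_on List.nodup_range]
    intro i hi j hj h
    rw [List.mem_range] at hi hj
    exact hinj i (by omega) j (by omega) h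
  · rw [hp, Walk.edges_copy, hwe]
    intro hmem
    rw [List.mem_map] at hmem
    obtain ⟨i, hi, heq⟩ := hmem
    rw [List.mem_range] at hi
    rw [Sym2.eq_iff] at heq
    rcases heq with ⟨ha, hb⟩ | ⟨ha, hb⟩
    · -- vf i = ⟨0⟩ : 1+i ≡ 0 with 1+i ≤ n-1
      have := congrArg Subtype.val ha
      have h0 : ((1 + i : ℕ) : ZMod n) = ((0 : ℕ) : ZMod n) := by simpa [hvf] using this
      have := natCast_inj_of_lt (by omega : 1 + i < n) (by omega : 0 < n) h0
      omega
    · -- vf i = ⟨1⟩ and vf (i+1) = ⟨0⟩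
      have h0 : ((1 + i : ℕ) : ZMod n) = ((1 : ℕ) : ZMod n) := by
        simpa [hvf] using congrArg Subtype.val ha
      have hi0 : i = 0 := by
        have := natCast_inj_of_lt (by omega : 1 + i < n) (by omega : 1 < n) h0
        omega
      subst hi0
      have h1 : ((2 : ℕ) : ZMod n) = ((0 : ℕ) : ZMod n) := by
        simpa [hvf, one_add_one_eq_two] using congrArg Subtype.val hb
      have := natCast_inj_of_lt (by omega : 2 < n) (by omega : 0 < n) h1
      omega
end univcyc

lemma acyclic_of_potential {V : Type} [DecidableEq V] (G : SimpleGraph V) (f : V → ℕ)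
    (hinj : Function.Injective f)
    (hadj : ∀ a b, G.Adj a b → f a = f b + 1 ∨ f b = f a + 1) : G.IsAcyclic := by
  intro x c hc
  -- pick max vertex
  have hne : c.support.toFinset.Nonempty := ⟨x, by simp [Walk.start_mem_support]⟩
  obtain ⟨m, hm, hmax⟩ := Finset.exists_max_image c.support.toFinset f hne
  rw [List.mem_toFinset] at hm
  have hmax' : ∀ a ∈ c.support, f a ≤ f m := fun a ha => hmax a (List.mem_toFinset.mpr ha)
  set c' := c.rotate m hm with hc'def
  have hcyc : c'.IsCycle := hc.rotate hm
  have hsupp : ∀ a, a ∈ c'.support ↔ a ∈ c.support := by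
    intro a
    rw [← Walk.mem_verts_toSubgraph, ← Walk.mem_verts_toSubgraph, Walk.toSubgraph_rotate]
  -- first edge
  have hnn : ¬ c'.Nil := hcyc.not_nil
  obtain ⟨y, hmy, q, hq⟩ := Walk.not_nil_iff.mp hnn
  -- last edge via reverse of q
  have hqnn : ¬ q.Nil := by
    intro h
    have : y = m := h.eq
    subst this
    exact G.loopless.irrefl y hmy
  have hqrnn : ¬ q.reverse.Nil := by
    rwa [Walk.nil_iff_length_eq, Walk.length_reverse, ← Walk.nil_iff_length_eq]
  obtain ⟨z, hmz, q2, hq2⟩ := Walk.not_nil_iff.mp hqrnn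
  -- y ≠ z
  have hyz : y ≠ z := by
    intro h
    subst h
    have htrail : c'.edges.Nodup := hcyc.isCircuit.isTrail.edges_nodup
    rw [hq, Walk.edges_cons] at htrail
    have : s(m, y) ∈ q.edges := by
      have : s(m, y) ∈ q.reverse.edges := by rw [hq2, Walk.edges_cons]; exact List.mem_cons_self
      rwa [Walk.edges_reverse, List.mem_reverse] at this
    exact (List.nodup_cons.mp htrail).1 this
  -- memberships
  have hy : y ∈ c.support := by
    rw [← hsupp, hq, Walk.support_cons]
    exact List.mem_cons_of_mem _ q.start_mem_support
  have hz : z ∈ c.support := by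
    rw [← hsupp, hq, Walk.support_cons]
    refine List.mem_cons_of_mem _ ?_
    have : z ∈ q.reverse.support := by rw [hq2, Walk.support_cons]; exact List.mem_cons_of_mem _ q2.start_mem_support
    rwa [Walk.support_reverse, List.mem_reverse] at this
  have hfy : f m = f y + 1 := by
    rcases hadj _ _ hmy with h | h
    · exact h
    · exact absurd (h ▸ hmax' y hy) (by omega)
  have hfz : f m = f z + 1 := by
    rcases hadj _ _ hmz with h | h
    · exact h
    · exact absurd (h ▸ hmax' z hz) (by omega)
  exact hyz (hinj (by omega))

section complside
variable {n : ℕ} (hn : 3 ≤ n)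
include hn

lemma compl_connected (v : ZMod n) : ((zmodCycle n).induce ({v}ᶜ : Set (ZMod n))).Connected := by
  haveI : NeZero n := ⟨by omega⟩
  set vf : ℕ → ZMod n := fun i => v + ((1 + i : ℕ) : ZMod n) with hvf
  have hadj : ∀ i < n - 2, (zmodCycle n).Adj (vf i) (vf (i + 1)) := by
    intro i _
    have h6 : vf (i+1) = vf i + 1 := by simp only [hvf]; push_cast; ring
    rw [h6]
    exact zc_adj_succ hn _
  obtain ⟨w, hws, -⟩ := chain_walk (zmodCycle n) (n - 2) vf hadj
  have hset : {x | x ∈ w.support} = ({v}ᶜ : Set (ZMod n)) := by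
    ext x
    simp only [Set.mem_setOf_eq, Set.mem_compl_iff, Set.mem_singleton_iff, hws, List.mem_map,
      List.mem_range]
    constructor
    · rintro ⟨i, hi, rfl⟩
      intro hx
      have h7 : ((1 + i : ℕ) : ZMod n) = ((0 : ℕ) : ZMod n) := by
        have := sub_eq_zero.mpr hx.symm
        simpa [hvf] using (by linear_combination -this : ((1 + i : ℕ) : ZMod n) = 0)
      have := natCast_inj_of_lt (by omega : 1 + i < n) (by omega : 0 < n) h7
      omega
    · intro hx
      set k := (x - v).val with hk
      have hkc : ((k : ℕ) : ZMod n) = x - v := ZMod.natCast_rightInverse _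
      have hkne : k ≠ 0 := by
        intro h0
        rw [h0] at hkc
        simp at hkc
        exact hx (sub_eq_zero.mp hkc.symm)
      have hklt : k < n := ZMod.val_lt _
      refine ⟨k - 1, by omega, ?_⟩
      simp only [hvf]
      have h8 : 1 + (k - 1) = k := by omega
      rw [h8, hkc]
      ring
  rw [← hset]
  exact w.connected_induce_support

lemma val_step {v x y : ZMod n} (hx : x ≠ v) (hy : y ≠ v) (h : x - y = 1) :
    (x - v).val = (y - v).val + 1 := by
  haveI : NeZero n := ⟨by omega⟩
  set β := y - v with hβ
  have hβc : ((β.val : ℕ) : ZMod n) = β := ZMod.natCast_rightInverse _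
  have hxe : x - v = β + 1 := by rw [hβ]; linear_combination h
  have hβlt : β.val < n := ZMod.val_lt _
  have hβne : β.val ≠ n - 1 := by
    intro he
    have : β = ((n - 1 : ℕ) : ZMod n) := by rw [← hβc, he]
    have h5 : ((n : ℕ) : ZMod n) = 0 := ZMod.natCast_self n
    have hm1 : ((n - 1 : ℕ) : ZMod n) = -1 := by
      push_cast [Nat.cast_sub (by omega : 1 ≤ n)]
      rw [h5]; ring
    rw [hm1] at this
    apply hx
    have hx0 : x - v = 0 := by rw [hxe, this]; ring
    exact sub_eq_zero.mp hx0
  have hcast : x - v = ((β.val + 1 : ℕ) : ZMod n) := by push_cast; rw [hβc, hxe]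
  rw [hcast, ZMod.val_cast_of_lt (by omega)]

lemma compl_acyclic (v : ZMod n) : ((zmodCycle n).induce ({v}ᶜ : Set (ZMod n))).IsAcyclic := by
  haveI : NeZero n := ⟨by omega⟩
  apply acyclic_of_potential _ (fun a => (a.1 - v).val)
  · intro a b h
    apply Subtype.ext
    have h2 := ZMod.val_injective n h
    exact sub_left_inj.mp h2
  · rintro a b ⟨hne, h | h⟩
    · exact Or.inl (val_step hn a.2 b.2 h)
    · exact Or.inr (val_step hn b.2 a.2 h)

lemma openNbhd_compl (v : ZMod n) : openNbhd (zmodCycle n) ({v}ᶜ : Set (ZMod n)) = {v} := by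
  haveI : NeZero n := ⟨by omega⟩
  ext u
  simp only [openNbhd, Set.mem_setOf_eq, Set.mem_compl_iff, Set.mem_singleton_iff, not_not]
  constructor
  · rintro ⟨h, -⟩; exact h
  · rintro rfl
    refine ⟨rfl, u + 1, ?_, zc_adj_succ' hn u⟩
    intro hmem
    have h9 : (1 : ZMod n) = 0 := by linear_combination hmem
    exact zc_one_ne_zero hn h9

end complside

section main
variable {n : ℕ} (hn : 3 ≤ n)
include hn

lemma prop_iff (r : ZMod n) (C : Set (ZMod n)) :
    (r ∈ C ∧ ((zmodCycle n).induce C).Connected ∧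
        ((zmodCycle n).induce C).IsAcyclic ∧
        (openNbhd (zmodCycle n) C).ncard ≤ 1) ↔ ∃ v : ZMod n, v ≠ r ∧ C = {v}ᶜ := by
  haveI : NeZero n := ⟨by omega⟩
  constructor
  · rintro ⟨hr, hconn, hacyc, hnb⟩
    have hne : Cᶜ.Nonempty := by
      rcases Set.eq_empty_or_nonempty Cᶜ with h | h
      · exfalso
        have hC : C = Set.univ := by
          rw [← compl_compl C, h, Set.compl_empty]
        rw [hC] at hacyc
        exact univ_not_acyclic hn hacyc
      · exact h
    have hsub : Cᶜ ⊆ openNbhd (zmodCycle n) C := by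
      intro u hu
      rw [Set.mem_compl_iff] at hu
      by_cases h1 : u + 1 ∈ C
      · exact ⟨hu, u + 1, h1, zc_adj_succ' hn u⟩
      · by_cases h2 : u - 1 ∈ C
        · refine ⟨hu, u - 1, h2, ?_⟩
          have := zc_adj_succ hn (u - 1)
          rwa [sub_add_cancel] at this
        · exfalso
          obtain ⟨a, b, hab, ha, hb⟩ := two_nbhd hn C r hr u hu h1 h2
          have : 1 < (openNbhd (zmodCycle n) C).ncard :=
            (Set.one_lt_ncard (Set.toFinite _)).mpr ⟨a, ha, b, hb, hab⟩
          omega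
    have hcard : Cᶜ.ncard ≤ 1 :=
      le_trans (Set.ncard_le_ncard hsub (Set.toFinite _)) hnb
    obtain ⟨v, hv⟩ := Set.exists_eq_singleton_iff_nonempty_subsingleton.mpr
      ⟨hne, fun _ ha _ hb => (Set.ncard_le_one_iff (Set.toFinite _)).mp hcard ha hb⟩
    refine ⟨v, ?_, ?_⟩
    · intro h
      have : r ∈ Cᶜ := by rw [hv, h]; rfl
      exact this hr
    · rw [← compl_compl C, hv]
  · rintro ⟨v, hvr, rfl⟩
    refine ⟨fun h => hvr (Set.mem_singleton_iff.mp h).symm,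
      compl_connected hn v, compl_acyclic hn v, ?_⟩
    rw [openNbhd_compl hn v, Set.ncard_singleton]

lemma seclusion_iff (r : ZMod n) (C : Set (ZMod n)) :
    SeclusionMaximal (zmodCycle n) (fun C =>
        r ∈ C ∧ ((zmodCycle n).induce C).Connected ∧
        ((zmodCycle n).induce C).IsAcyclic ∧
        (openNbhd (zmodCycle n) C).ncard ≤ 1) C ↔ ∃ v : ZMod n, v ≠ r ∧ C = {v}ᶜ := by
  constructor
  · intro h
    exact (prop_iff hn r C).mp h.1
  · intro h
    refine ⟨(prop_iff hn r C).mpr h, ?_⟩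
    obtain ⟨v, hvr, rfl⟩ := h
    intro C' hsub hPr'
    exfalso
    have hC' : C' = Set.univ := by
      rw [Set.eq_univ_iff_forall]
      intro x
      by_cases hx : x = v
      · obtain ⟨y, hy, hyn⟩ := Set.exists_of_ssubset hsub
        have : y = v := not_not.mp hyn
        rwa [hx, ← this]
      · exact hsub.1 hx
    rw [hC'] at hPr'
    exact univ_not_acyclic hn hPr'.2.2.1

end main

theorem stmt13 (n : ℕ) (hn : 3 ≤ n) (r : ZMod n) :
    {C : Set (ZMod n) | SeclusionMaximal (zmodCycle n) (fun C =>
        r ∈ C ∧ ((zmodCycle n).induce C).Connected ∧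
        ((zmodCycle n).induce C).IsAcyclic ∧
        (openNbhd (zmodCycle n) C).ncard ≤ 1) C}
      = {C : Set (ZMod n) | ∃ v : ZMod n, v ≠ r ∧ C = {v}ᶜ} ∧
    {C : Set (ZMod n) | SeclusionMaximal (zmodCycle n) (fun C =>
        r ∈ C ∧ ((zmodCycle n).induce C).Connected ∧
        ((zmodCycle n).induce C).IsAcyclic ∧
        (openNbhd (zmodCycle n) C).ncard ≤ 1) C}.ncard = n - 1 := by
  haveI : NeZero n := ⟨by omega⟩
  have heq : {C : Set (ZMod n) | SeclusionMaximal (zmodCycle n) (fun C =>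
        r ∈ C ∧ ((zmodCycle n).induce C).Connected ∧
        ((zmodCycle n).induce C).IsAcyclic ∧
        (openNbhd (zmodCycle n) C).ncard ≤ 1) C}
      = {C : Set (ZMod n) | ∃ v : ZMod n, v ≠ r ∧ C = {v}ᶜ} := by
    ext C
    exact seclusion_iff hn r C
  refine ⟨heq, ?_⟩
  rw [heq]
  have himg : {C : Set (ZMod n) | ∃ v : ZMod n, v ≠ r ∧ C = {v}ᶜ}
      = (fun v : ZMod n => ({v}ᶜ : Set (ZMod n))) '' ({r}ᶜ : Set (ZMod n)) := by
    ext C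
    constructor
    · rintro ⟨v, hvr, rfl⟩
      exact ⟨v, hvr, rfl⟩
    · rintro ⟨v, hvr, rfl⟩
      exact ⟨v, hvr, rfl⟩
  rw [himg, Set.ncard_image_of_injective _ ?hinj]
  case hinj =>
    intro a b h
    have := compl_injective h
    exact Set.singleton_eq_singleton_iff.mp this
  rw [Set.compl_eq_univ_diff, Set.ncard_diff (Set.subset_univ _) (Set.toFinite _),
    Set.ncard_univ, Set.ncard_singleton, Nat.card_eq_fintype_card, ZMod.card]
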